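/- Let m > 1 and define j_{m,2}(X) = -X^{-m} + X^{1-m} + X - X^2 for X > 0. Then j_{m,2}''(X) ≤ -2 for all X ∈ (0, 1+1/m], and consequently j_{m,2}(X) ≤ -(X-1)^2 for all X ∈ (0, 1+1/m]. -/

import Mathlib

open Real

section aux

variable (m : ℝ)

private noncomputable def f6 : ℝ → ℝ := fun X => -X ^ (-m) + X ^ (1 - m) + X - X ^ (2 : ℕ)
private noncomputable def g6 : ℝ → ℝ := fun X => m * X ^ (-m - 1) + (1 - m) * X ^ (-m) + 1 - 2 * X
private noncomputable def h6 : ℝ → ℝ := fun X =>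
  m * ((-m - 1) * X ^ (-m - 2)) + (1 - m) * (-m * X ^ (-m - 1)) - 2

private lemma hasDerivAt_f6 {x : ℝ} (hx : 0 < x) : HasDerivAt (f6 m) (g6 m x) x := by
  have h1 : HasDerivAt (fun X : ℝ => X ^ (-m)) (-m * x ^ (-m - 1)) x := by
    have := Real.hasDerivAt_rpow_const (x := x) (p := -m) (Or.inl hx.ne')
    simpa [sub_eq_add_neg] using this
  have h2 : HasDerivAt (fun X : ℝ => X ^ (1 - m)) ((1 - m) * x ^ (-m)) x := by
    have := Real.hasDerivAt_rpow_const (x := x) (p := 1 - m) (Or.inl hx.ne')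
    have e : (1 : ℝ) - m - 1 = -m := by ring
    rwa [e] at this
  have h3 : HasDerivAt (fun X : ℝ => X) 1 x := hasDerivAt_id x
  have h4 : HasDerivAt (fun X : ℝ => X ^ (2 : ℕ)) (2 * x) x := by
    simpa using hasDerivAt_pow 2 x
  have := ((h1.neg.add h2).add h3).sub h4
  refine this.congr_deriv ?_
  simp only [g6]; ring

private lemma hasDerivAt_g6 {x : ℝ} (hx : 0 < x) : HasDerivAt (g6 m) (h6 m x) x := by
  have h1 : HasDerivAt (fun X : ℝ => X ^ (-m - 1)) ((-m - 1) * x ^ (-m - 2)) x := by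
    have := Real.hasDerivAt_rpow_const (x := x) (p := -m - 1) (Or.inl hx.ne')
    have e : -m - 1 - 1 = -m - 2 := by ring
    rwa [e] at this
  have h2 : HasDerivAt (fun X : ℝ => X ^ (-m)) (-m * x ^ (-m - 1)) x := by
    have := Real.hasDerivAt_rpow_const (x := x) (p := -m) (Or.inl hx.ne')
    simpa [sub_eq_add_neg] using this
  have h3 : HasDerivAt (fun X : ℝ => 2 * X) 2 x := by
    simpa using (hasDerivAt_id x).const_mul 2
  have := (((h1.const_mul m).add (h2.const_mul (1 - m))).add_const 1).sub h3
  exact this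

private lemma deriv_f6_eq {x : ℝ} (hx : 0 < x) : deriv (f6 m) x = g6 m x :=
  (hasDerivAt_f6 m hx).deriv

private lemma deriv2_f6_eq {x : ℝ} (hx : 0 < x) : deriv (deriv (f6 m)) x = h6 m x := by
  have hev : deriv (f6 m) =ᶠ[nhds x] g6 m := by
    filter_upwards [eventually_gt_nhds hx] with y hy using deriv_f6_eq m hy
  rw [hev.deriv_eq]
  exact (hasDerivAt_g6 m hx).deriv

end aux

/-- For `m > 1` and `j_{m,2}(X) = -X^{-m} + X^{1-m} + X - X²`, one has
`j_{m,2}'' ≤ -2` on `(0, 1+1/m]`, hence `j_{m,2}(X) ≤ -(X-1)²` there. -/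
theorem stmt_6 (m : ℝ) (hm : 1 < m) :
    ∀ X ∈ Set.Ioc (0 : ℝ) (1 + 1 / m),
      deriv (deriv (fun X : ℝ => -X ^ (-m) + X ^ (1 - m) + X - X ^ (2 : ℕ))) X ≤ -2 ∧
      -X ^ (-m) + X ^ (1 - m) + X - X ^ (2 : ℕ) ≤ -(X - 1) ^ (2 : ℕ) := by
  have hm0 : (0 : ℝ) < m := by linarith
  set C : ℝ := 1 + 1 / m with hC
  have h1C : (1 : ℝ) ≤ C := by
    have : (0 : ℝ) < 1 / m := by positivity
    rw [hC]; linarith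
  -- key pointwise bound on the second derivative
  have key : ∀ x ∈ Set.Ioc (0 : ℝ) C, h6 m x ≤ -2 := by
    intro x hx
    obtain ⟨hx0, hxC⟩ := hx
    have hpow : x ^ (-m - 1) = x ^ (-m - 2) * x := by
      have e : -m - 1 = -m - 2 + 1 := by ring
      rw [e, Real.rpow_add_one hx0.ne']
    have hp2 : (0 : ℝ) < x ^ (-m - 2) := Real.rpow_pos_of_pos hx0 _
    have hxle : (m - 1) * x ≤ (m - 1) * C := by
      have : (0 : ℝ) ≤ m - 1 := by linarith
      nlinarith
    have hCval : (m - 1) * C = m - 1 / m := by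
      rw [hC]; field_simp; ring
    have hneg : (m - 1) * x - (m + 1) < 0 := by
      have h1m : (0 : ℝ) < 1 / m := by positivity
      rw [hCval] at hxle; linarith
    have : m * ((-m - 1) * x ^ (-m - 2)) + (1 - m) * (-m * x ^ (-m - 1)) =
        m * x ^ (-m - 2) * ((m - 1) * x - (m + 1)) := by
      rw [hpow]; ring
    simp only [h6, this]
    have hnp : m * x ^ (-m - 2) * ((m - 1) * x - (m + 1)) ≤ 0 :=
      mul_nonpos_of_nonneg_of_nonpos (mul_pos hm0 hp2).le hneg.le
    linarith
  intro X hX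
  obtain ⟨hX0, hXC⟩ := hX
  constructor
  · show deriv (deriv (f6 m)) X ≤ -2
    rw [deriv2_f6_eq m hX0]
    exact key X ⟨hX0, hXC⟩
  -- the quadratic bound
  · -- let G x = f x + (x-1)^2; show G X ≤ 0
    set G : ℝ → ℝ := fun x => f6 m x + (x - 1) ^ (2 : ℕ) with hG
    set G' : ℝ → ℝ := fun x => g6 m x + 2 * (x - 1) with hG'
    have hasG : ∀ x : ℝ, 0 < x → HasDerivAt G (G' x) x := by
      intro x hx
      have h2 : HasDerivAt (fun y : ℝ => (y - 1) ^ (2 : ℕ)) (2 * (x - 1)) x := by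
        have := ((hasDerivAt_id x).sub_const 1).pow 2
        exact this.congr_deriv (by simp)
      exact (hasDerivAt_f6 m hx).add h2
    have hasG' : ∀ x : ℝ, 0 < x → HasDerivAt G' (h6 m x + 2) x := by
      intro x hx
      have h2 : HasDerivAt (fun y : ℝ => 2 * (y - 1)) 2 x := by
        simpa using ((hasDerivAt_id x).sub_const 1).const_mul 2
      exact (hasDerivAt_g6 m hx).add h2
    have hIoc : Set.Ioc (0 : ℝ) C ⊆ Set.Ioi 0 := fun y hy => hy.1
    -- G' is antitone on Ioc 0 C
    have hanti : AntitoneOn G' (Set.Ioc (0 : ℝ) C) := by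
      apply antitoneOn_of_deriv_nonpos (convex_Ioc 0 C)
      · exact fun y hy => (hasG' y hy.1).continuousAt.continuousWithinAt
      · intro y hy
        rw [interior_Ioc] at hy
        exact (hasG' y hy.1).differentiableAt.differentiableWithinAt
      · intro y hy
        rw [interior_Ioc] at hy
        rw [(hasG' y hy.1).deriv]
        have := key y ⟨hy.1, hy.2.le⟩
        linarith
    have h1mem : (1 : ℝ) ∈ Set.Ioc (0 : ℝ) C := ⟨one_pos, h1C⟩
    have hG'1 : G' 1 = 0 := by
      simp [hG', g6, Real.one_rpow]; norm_num
    have hG1 : G 1 = 0 := by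
      norm_num [hG, f6, Real.one_rpow]
    have hGX : G X ≤ 0 := by
      rcases le_total X 1 with hX1 | hX1
      · -- G monotone on Icc X 1
        have hsub : Set.Icc X 1 ⊆ Set.Ioc (0 : ℝ) C := fun y hy =>
          ⟨lt_of_lt_of_le hX0 hy.1, le_trans hy.2 h1C⟩
        have hmono : MonotoneOn G (Set.Icc X 1) := by
          apply monotoneOn_of_deriv_nonneg (convex_Icc X 1)
          · exact fun y hy => (hasG y (hX0.trans_le hy.1)).continuousAt.continuousWithinAt
          · intro y hy
            rw [interior_Icc] at hy
            exact (hasG y (hX0.trans hy.1)).differentiableAt.differentiableWithinAt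
          · intro y hy
            rw [interior_Icc] at hy
            rw [(hasG y (hX0.trans hy.1)).deriv]
            have := hanti (hsub ⟨hy.1.le, hy.2.le⟩) h1mem hy.2.le
            rw [hG'1] at this
            linarith
        have := hmono (Set.left_mem_Icc.2 hX1) (Set.right_mem_Icc.2 hX1) hX1
        rw [hG1] at this; exact this
      · -- G antitone on Icc 1 X
        have hsub : Set.Icc 1 X ⊆ Set.Ioc (0 : ℝ) C := fun y hy =>
          ⟨lt_of_lt_of_le one_pos hy.1, le_trans hy.2 hXC⟩
        have hantiG : AntitoneOn G (Set.Icc 1 X) := by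
          apply antitoneOn_of_deriv_nonpos (convex_Icc 1 X)
          · exact fun y hy => (hasG y (lt_of_lt_of_le one_pos hy.1)).continuousAt.continuousWithinAt
          · intro y hy
            rw [interior_Icc] at hy
            exact (hasG y (lt_trans one_pos hy.1)).differentiableAt.differentiableWithinAt
          · intro y hy
            rw [interior_Icc] at hy
            rw [(hasG y (lt_trans one_pos hy.1)).deriv]
            have := hanti h1mem (hsub ⟨hy.1.le, hy.2.le⟩) hy.1.le
            rw [hG'1] at this
            linarith
        have := hantiG (Set.left_mem_Icc.2 hX1) (Set.right_mem_Icc.2 hX1) hX1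
        rw [hG1] at this; exact this
    show f6 m X ≤ -(X - 1) ^ (2 : ℕ)
    simp only [hG] at hGX; linarith
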